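/- Let p be a prime with p ≡ 3 (mod 4) such that √p = ⟨n; α, β, α, 2n⟩ has period length 4. Then p does not divide y, where x + y√p is the fundamental unit of ℚ(√p). -/

import Mathlib

set_option maxHeartbeats 2000000

/-- State `(m, d)` of the continued fraction algorithm for `√p` at step `i`,
representing the complete quotient `(√p + m) / d`; initial state `(0, 1)`. -/
def cfState (p : ℕ) : ℕ → ℕ × ℕ
  | 0 => (0, 1)
  | i + 1 =>
    let m := (cfState p i).1
    let d := (cfState p i).2
    let a := (Nat.sqrt p + m) / d
    (a * d - m, (p - (a * d - m) ^ 2) / d)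

/-- The `i`-th partial quotient `aᵢ` of the regular continued fraction of `√p`
(so `cfA p 0 = ⌊√p⌋`). -/
def cfA (p i : ℕ) : ℕ := (Nat.sqrt p + (cfState p i).1) / (cfState p i).2

/-- The period length `l` of the regular continued fraction of `√p`. -/
noncomputable def cfPeriod (p : ℕ) : ℕ := sInf {l | 0 < l ∧ cfState p (l + 1) = cfState p 1}

/-- `cfH p (i + 1)` is the denominator `hᵢ` of the `i`-th convergent of `√p`,
with the convention `cfH p 0 = h₋₁ = 0`, `cfH p 1 = h₀ = 1`,
`hᵢ₊₁ = aᵢ₊₁ hᵢ + hᵢ₋₁`. -/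
def cfH (p : ℕ) : ℕ → ℕ
  | 0 => 0
  | 1 => 1
  | i + 2 => cfA p (i + 1) * cfH p (i + 1) + cfH p i

section Aux

lemma cfStepAux (p n m d a m' d' : ℕ)
    (h1 : n*n < p) (h2 : p < (n+1)*(n+1))
    (hm1 : 1 ≤ m) (hmn : m ≤ n) (hd1 : 1 ≤ d) (hdn : d ≤ n + m) (hdvd : d ∣ p - m^2)
    (ha : a = (n + m)/d) (hm' : m' = a*d - m) (hd' : d' = (p - m'^2)/d) :
    1 ≤ a ∧ a*d = m + m' ∧ 1 ≤ m' ∧ m' ≤ n ∧ 1 ≤ d' ∧ d' ≤ n + m'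
      ∧ d ∣ p - m'^2 ∧ d * d' = p - m'^2 ∧ (2 ≤ d → a ≤ n) := by
  have hd0 : 0 < d := hd1
  have ha1 : 1 ≤ a := by
    rw [ha]; exact (Nat.one_le_div_iff hd0).mpr hdn
  have had1 : a*d ≤ n + m := by rw [ha]; exact Nat.div_mul_le_self _ _
  have had2 : n + m < a*d + d := by
    have h := Nat.div_add_mod (n+m) d
    have h2' := Nat.mod_lt (n+m) hd0
    rw [← ha, Nat.mul_comm] at h; omega
  have hmad : m < a*d := by
    rcases le_or_gt d n with h | h
    · omega
    · have : d ≤ a*d := Nat.le_mul_of_pos_left d ha1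
      omega
  have hsum : a*d = m + m' := by omega
  have hm'1 : 1 ≤ m' := by omega
  have hm'n : m' ≤ n := by omega
  have hm2p : m^2 ≤ p := by nlinarith
  have hm'2p : m'^2 < p := by nlinarith
  have h1' : (d:ℤ) ∣ (p:ℤ) - (m:ℤ)^2 := by
    have := Int.natCast_dvd_natCast.mpr hdvd
    rwa [Nat.cast_sub hm2p, Nat.cast_pow] at this
  have hmm : (m':ℤ) = (a:ℤ)*d - m := by
    have h4 : (a:ℤ)*d = m + m' := by exact_mod_cast hsum
    linarith
  have h2' : (d:ℤ) ∣ (p:ℤ) - (m':ℤ)^2 := by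
    have h3 : (d:ℤ) ∣ ((p:ℤ) - (m':ℤ)^2) - ((p:ℤ) - (m:ℤ)^2) :=
      ⟨(2*a*m - a^2*d), by rw [hmm]; ring⟩
    have h4 := dvd_add h1' h3
    rw [show (p:ℤ) - (m':ℤ)^2 = ((p:ℤ) - (m:ℤ)^2) + (((p:ℤ) - (m':ℤ)^2) - ((p:ℤ) - (m:ℤ)^2)) by ring]
    exact h4
  have hdvd' : d ∣ p - m'^2 := by
    have h5 : ((d:ℤ)) ∣ ((p - m'^2 : ℕ) : ℤ) := by
      rwa [Nat.cast_sub hm'2p.le, Nat.cast_pow]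
    exact Int.natCast_dvd_natCast.mp h5
  have hdd' : d * d' = p - m'^2 := by
    rw [hd', Nat.mul_div_cancel' hdvd']
  have hd'1 : 1 ≤ d' := by
    rcases Nat.eq_zero_or_pos d' with h | h
    · rw [h, Nat.mul_zero] at hdd'; omega
    · exact h
  have hdm' : n + 1 ≤ d + m' := by omega
  have hd'n : d' ≤ n + m' := by
    by_contra hcon
    push_neg at hcon
    have c1 : (n:ℤ)+1 ≤ (d:ℤ) + m' := by exact_mod_cast hdm'
    have c2 : (n:ℤ) + m' + 1 ≤ (d':ℤ) := by exact_mod_cast hcon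
    have c3 : (d:ℤ)*d' + (m':ℤ)^2 = p := by
      have h6 : d*d' + m'^2 = p := by omega
      exact_mod_cast h6
    have c4 : (p:ℤ) < ((n:ℤ)+1)*((n:ℤ)+1) := by exact_mod_cast h2
    have c5 : (m':ℤ) ≤ n := by exact_mod_cast hm'n
    have c6 : (1:ℤ) ≤ d' := by exact_mod_cast hd'1
    nlinarith [mul_nonneg (by linarith : (0:ℤ) ≤ (d:ℤ) - ((n:ℤ)+1-m'))
        (by linarith : (0:ℤ) ≤ (d':ℤ)),
      mul_nonneg (by linarith : (0:ℤ) ≤ (n:ℤ)+1-m')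
        (by linarith : (0:ℤ) ≤ (d':ℤ) - ((n:ℤ)+m'+1))]
  have halast : 2 ≤ d → a ≤ n := by
    intro h2d
    rw [ha]
    calc (n+m)/d ≤ (n+n)/d := Nat.div_le_div_right (by omega)
    _ ≤ (n+n)/2 := Nat.div_le_div_left h2d (by omega)
    _ = n := by omega
  exact ⟨ha1, hsum, hm'1, hm'n, hd'1, hd'n, hdvd', hdd', halast⟩

lemma stepIAux (p a m M d D km k1 hm h1 : ℤ) (hd : d ≠ 0)
    (had : a*d = m + M) (hdd : d*D = p - M^2)
    (i1 : k1 = m*h1 + d*hm) (i2 : p*h1 = m*k1 + d*km) :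
    (a*k1 + km) = M*(a*h1 + hm) + D*h1 ∧ p*(a*h1+hm) = M*(a*k1+km) + D*k1 := by
  constructor
  · apply mul_left_cancel₀ hd
    linear_combination (k1 - M*h1)*had + (-h1)*hdd + M*i1 + (-1)*i2
  · apply mul_left_cancel₀ hd
    linear_combination (p*h1 - M*k1)*had + (-k1)*hdd + (-p)*i1 + M*i2

lemma cfState_succ_fst (p i : ℕ) :
    (cfState p (i+1)).1 =
      ((Nat.sqrt p + (cfState p i).1) / (cfState p i).2) * (cfState p i).2 - (cfState p i).1 :=
  rfl

lemma cfState_succ_snd (p i : ℕ) :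
    (cfState p (i+1)).2 = (p - ((cfState p (i+1)).1) ^ 2) / (cfState p i).2 :=
  rfl

lemma cfState_one (p : ℕ) : cfState p 1 = (Nat.sqrt p, p - Nat.sqrt p ^ 2) := by
  show ((Nat.sqrt p + 0) / 1 * 1 - 0, (p - ((Nat.sqrt p + 0) / 1 * 1 - 0) ^ 2) / 1) = _
  simp

lemma cfState_done (p i : ℕ) (h : (cfState p i).2 = 1) :
    cfState p (i+1) = (Nat.sqrt p, p - Nat.sqrt p ^ 2) := by
  have h1 : (cfState p (i+1)).1 = Nat.sqrt p := by
    rw [cfState_succ_fst, h]; simp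
  have h2 : (cfState p (i+1)).2 = p - Nat.sqrt p ^ 2 := by
    rw [cfState_succ_snd, h, h1]; simp
  exact Prod.ext h1 h2

end Aux


theorem stmt12 (p : ℕ) (hp : p.Prime) (h3 : p % 4 = 3) (hl : cfPeriod p = 4)
    (u : Pell.Solution₁ (p : ℤ)) (hu : Pell.IsFundamental u) :
    ¬ (p : ℤ) ∣ u.y := by
  intro hdvd
  have hp3 : 3 ≤ p := by
    have h2 := hp.two_le
    omega
  set n := Nat.sqrt p with hn
  have hn1 : 1 ≤ n := by
    rw [hn]; exact Nat.sqrt_pos.mpr (by omega)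
  have hnsq : n^2 ≤ p := Nat.sqrt_le' p
  have hnp : n^2 < p := by
    rcases lt_or_eq_of_le hnsq with h | h
    · exact h
    · exfalso
      have hdvd' : n ∣ p := ⟨n, by rw [← h]; ring⟩
      rcases hp.eq_one_or_self_of_dvd n hdvd' with h1 | h1
      · rw [h1] at h; simp at h; omega
      · rw [h1] at h; nlinarith only [h, hp3]
  have hnp2 : p < (n+1)^2 := Nat.lt_succ_sqrt' p
  have hnpm : n*n < p := by rw [← pow_two]; exact hnp
  have hnpm2 : p < (n+1)*(n+1) := by rw [← pow_two]; exact hnp2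
  -- period facts
  have hl' : sInf {l | 0 < l ∧ cfState p (l + 1) = cfState p 1} = 4 := hl
  have hSne : {l | 0 < l ∧ cfState p (l + 1) = cfState p 1}.Nonempty := by
    by_contra h
    rw [Set.not_nonempty_iff_eq_empty] at h
    rw [h, Nat.sInf_empty] at hl'
    omega
  have h4S : cfState p 5 = cfState p 1 := by
    have hmem := Nat.sInf_mem hSne
    rw [hl'] at hmem
    exact hmem.2
  have hmin : ∀ l, 0 < l → cfState p (l+1) = cfState p 1 → 4 ≤ l := by
    intro l h0 hst
    have := Nat.sInf_le (show l ∈ {l | 0 < l ∧ cfState p (l + 1) = cfState p 1} from ⟨h0, hst⟩)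
    omega
  -- state 1
  have st1 : cfState p 1 = (n, p - n^2) := by rw [hn]; exact cfState_one p
  have hd1ge1 : 1 ≤ p - n^2 := by omega
  have hd1le : p - n^2 ≤ n + n := by
    have : (n+1)^2 = n^2 + 2*n + 1 := by ring
    omega
  -- step 1
  have hm2e : (cfState p 2).1 = ((n + n)/(p - n^2)) * (p - n^2) - n := by
    have h := cfState_succ_fst p 1
    rw [st1] at h
    rw [← hn] at h
    exact h
  have hd2e : (cfState p 2).2 = (p - ((cfState p 2).1)^2)/(p - n^2) := by
    have h := cfState_succ_snd p 1
    rw [st1] at h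
    exact h
  obtain ⟨ha1pos, hsum1, hm2pos, hm2n, hd2pos, hd2n, hdvd2, hdd2, ha1n⟩ :=
    cfStepAux p n n (p - n^2) ((n + n)/(p - n^2)) (cfState p 2).1 (cfState p 2).2
      hnpm hnpm2 hn1 le_rfl hd1ge1 hd1le (dvd_refl _) rfl hm2e hd2e
  -- step 2
  have hm3e : (cfState p 3).1 =
      ((n + (cfState p 2).1)/(cfState p 2).2) * (cfState p 2).2 - (cfState p 2).1 := by
    have h := cfState_succ_fst p 2
    rw [← hn] at h
    exact h
  have hd3e : (cfState p 3).2 = (p - ((cfState p 3).1)^2)/(cfState p 2).2 := cfState_succ_snd p 2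
  obtain ⟨ha2pos, hsum2, hm3pos, hm3n, hd3pos, hd3n, hdvd3, hdd3, ha2n⟩ :=
    cfStepAux p n (cfState p 2).1 (cfState p 2).2 ((n + (cfState p 2).1)/(cfState p 2).2)
      (cfState p 3).1 (cfState p 3).2
      hnpm hnpm2 hm2pos hm2n hd2pos hd2n ⟨(p - n^2), by rw [← hdd2]; ring⟩ rfl hm3e hd3e
  -- step 3
  have hm4e : (cfState p 4).1 =
      ((n + (cfState p 3).1)/(cfState p 3).2) * (cfState p 3).2 - (cfState p 3).1 := by
    have h := cfState_succ_fst p 3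
    rw [← hn] at h
    exact h
  have hd4e : (cfState p 4).2 = (p - ((cfState p 4).1)^2)/(cfState p 3).2 := cfState_succ_snd p 3
  obtain ⟨ha3pos, hsum3, hm4pos, hm4n, hd4pos, hd4n, hdvd4, hdd4, ha3n⟩ :=
    cfStepAux p n (cfState p 3).1 (cfState p 3).2 ((n + (cfState p 3).1)/(cfState p 3).2)
      (cfState p 4).1 (cfState p 4).2
      hnpm hnpm2 hm3pos hm3n hd3pos hd3n ⟨(cfState p 2).2, by rw [← hdd3]; ring⟩ rfl hm4e hd4e
  -- step 4
  have hm5e : (cfState p 5).1 =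
      ((n + (cfState p 4).1)/(cfState p 4).2) * (cfState p 4).2 - (cfState p 4).1 := by
    have h := cfState_succ_fst p 4
    rw [← hn] at h
    exact h
  have hd5e : (cfState p 5).2 = (p - ((cfState p 5).1)^2)/(cfState p 4).2 := cfState_succ_snd p 4
  obtain ⟨ha4pos, hsum4, hm5pos, hm5n, hd5pos, hd5n, hdvd5, hdd5, ha4n⟩ :=
    cfStepAux p n (cfState p 4).1 (cfState p 4).2 ((n + (cfState p 4).1)/(cfState p 4).2)
      (cfState p 5).1 (cfState p 5).2
      hnpm hnpm2 hm4pos hm4n hd4pos hd4n ⟨(cfState p 3).2, by rw [← hdd4]; ring⟩ rfl hm5e hd5e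
  -- state 5 = state 1, so d4 = 1
  have hm5v : (cfState p 5).1 = n := by rw [h4S, st1]
  have hd5v : (cfState p 5).2 = p - n^2 := by rw [h4S, st1]
  have hd4one : (cfState p 4).2 = 1 := by
    rw [hm5v, hd5v] at hdd5
    have h6 : (cfState p 4).2 * (p - n^2) = 1 * (p - n^2) := by rw [hdd5]; ring
    exact Nat.eq_of_mul_eq_mul_right (by omega) h6
  -- d1 ≥ 2
  have hd1ge2 : 2 ≤ p - n^2 := by
    rcases Nat.lt_or_ge (p - n^2) 2 with h | h
    · exfalso
      have hpn : p = n^2 + 1 := by omega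
      rcases Nat.even_or_odd n with ⟨k, hk⟩ | ⟨k, hk⟩
      · have : n^2 = 4*(k*k) := by rw [hk]; ring
        omega
      · have : n^2 = 4*(k*k) + 4*k + 1 := by rw [hk]; ring
        omega
    · exact h
  -- d2 ≥ 2
  have hd2ge2 : 2 ≤ (cfState p 2).2 := by
    rcases Nat.lt_or_ge ((cfState p 2).2) 2 with h | h
    · exfalso
      have h1 : (cfState p 2).2 = 1 := by omega
      have h2 : cfState p 3 = cfState p 1 := by
        rw [st1, hn]
        exact cfState_done p 2 h1
      have := hmin 2 (by norm_num) h2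
      omega
    · exact h
  have ha1len : (n + n)/(p - n^2) ≤ n := ha1n hd1ge2
  have ha2len : (n + (cfState p 2).1)/(cfState p 2).2 ≤ n := ha2n hd2ge2
  -- move to ℤ
  set N : ℤ := (n : ℤ) with hN
  set A1 : ℤ := (((n + n)/(p - n^2) : ℕ) : ℤ) with hA1
  set A2 : ℤ := (((n + (cfState p 2).1)/(cfState p 2).2 : ℕ) : ℤ) with hA2
  set A3 : ℤ := (((n + (cfState p 3).1)/(cfState p 3).2 : ℕ) : ℤ) with hA3
  set M2 : ℤ := (((cfState p 2).1 : ℕ) : ℤ) with hM2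
  set M3 : ℤ := (((cfState p 3).1 : ℕ) : ℤ) with hM3
  set M4 : ℤ := (((cfState p 4).1 : ℕ) : ℤ) with hM4
  set D2 : ℤ := (((cfState p 2).2 : ℕ) : ℤ) with hD2
  set D3 : ℤ := (((cfState p 3).2 : ℕ) : ℤ) with hD3
  set D4 : ℤ := (((cfState p 4).2 : ℕ) : ℤ) with hD4
  have hD1cast : ((p - n^2 : ℕ) : ℤ) = ((p:ℤ)) - N^2 := by
    rw [hN]; push_cast [hnsq]; ring
  have zsum1 : A1*(((p:ℤ)) - N^2) = N + M2 := by
    rw [← hD1cast, hA1, hN, hM2]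
    exact_mod_cast hsum1
  have zdd2 : (((p:ℤ)) - N^2)*D2 = ((p:ℤ)) - M2^2 := by
    have hle : (cfState p 2).1^2 ≤ p := by
      have := Nat.pow_le_pow_left hm2n 2; omega
    rw [← hD1cast, hD2, hM2]
    push_cast [hle]
    exact_mod_cast hdd2
  have zsum2 : A2*D2 = M2 + M3 := by rw [hA2, hD2, hM2, hM3]; exact_mod_cast hsum2
  have zdd3 : D2*D3 = ((p:ℤ)) - M3^2 := by
    have hle : (cfState p 3).1^2 ≤ p := by
      have := Nat.pow_le_pow_left hm3n 2; omega
    rw [hD2, hD3, hM3]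
    push_cast [hle]
    exact_mod_cast hdd3
  have zsum3 : A3*D3 = M3 + M4 := by rw [hA3, hD3, hM3, hM4]; exact_mod_cast hsum3
  have zdd4 : D3*D4 = ((p:ℤ)) - M4^2 := by
    have hle : (cfState p 4).1^2 ≤ p := by
      have := Nat.pow_le_pow_left hm4n 2; omega
    rw [hD3, hD4, hM4]
    push_cast [hle]
    exact_mod_cast hdd4
  have hD1ne : ((p:ℤ)) - N^2 ≠ 0 := by
    rw [← hD1cast]
    exact_mod_cast (show (p - n^2 : ℕ) ≠ 0 by omega)
  have hD2ne : D2 ≠ 0 := by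
    rw [hD2]
    exact_mod_cast (show (cfState p 2).2 ≠ 0 by omega)
  have hD3ne : D3 ≠ 0 := by
    rw [hD3]
    exact_mod_cast (show (cfState p 3).2 ≠ 0 by omega)
  -- identity chain
  obtain ⟨I12, I22⟩ := stepIAux ((p:ℤ)) A1 N M2 (((p:ℤ)) - N^2) D2 1 N 0 1 hD1ne zsum1 zdd2
    (by ring) (by ring)
  obtain ⟨I13, I23⟩ := stepIAux ((p:ℤ)) A2 M2 M3 D2 D3 N (A1*N + 1) 1 (A1*1 + 0) hD2ne zsum2 zdd3
    I12 I22
  obtain ⟨I14, I24⟩ := stepIAux ((p:ℤ)) A3 M3 M4 D3 D4 (A1*N + 1) (A2*(A1*N + 1) + N)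
    (A1*1 + 0) (A2*(A1*1 + 0) + 1) hD3ne zsum3 zdd4 I13 I23
  have hd4z : D4 = 1 := by rw [hD4, hd4one]; norm_num
  -- clean identities
  have e1 : A3*(A2*(A1*N+1)+N) + (A1*N+1)
      = M4*(A3*(A2*A1+1)+A1) + (A2*A1+1) := by
    linear_combination I14 + (A2*(A1*1+0)+1)*hd4z
  have e2 : ((p:ℤ))*(A3*(A2*A1+1)+A1)
      = M4*(A3*(A2*(A1*N+1)+N) + (A1*N+1)) + (A2*(A1*N+1)+N) := by
    linear_combination I24 + (A2*(A1*N+1)+N)*hd4z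
  have e3 : (A3*(A2*(A1*N+1)+N) + (A1*N+1))^2 - ((p:ℤ))*(A3*(A2*A1+1)+A1)^2 = 1 := by
    linear_combination (A3*(A2*(A1*N+1)+N) + (A1*N+1))*e1 - (A3*(A2*A1+1)+A1)*e2
  set K3 : ℤ := A3*(A2*(A1*N+1)+N) + (A1*N+1) with hK3
  set H3 : ℤ := A3*(A2*A1+1)+A1 with hH3
  -- Pell solution
  have hK3pos : 0 < K3 := by rw [hK3, hA1, hA2, hA3, hN]; positivity
  have hH3nn : 0 ≤ H3 := by rw [hH3, hA1, hA2, hA3]; positivity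
  have e3' : K3^2 - (p:ℤ)*H3^2 = 1 := e3
  set s : Pell.Solution₁ (p:ℤ) := Pell.Solution₁.mk K3 H3 e3' with hs
  have hsx : 0 < s.x := by rw [hs, Pell.Solution₁.x_mk]; exact hK3pos
  have hsy : 0 ≤ s.y := by rw [hs, Pell.Solution₁.y_mk]; exact hH3nn
  obtain ⟨j, hj⟩ := hu.eq_pow_of_nonneg hsx hsy
  have hdvdall : ∀ k : ℕ, (p:ℤ) ∣ (u^k).y := by
    intro k
    induction k with
    | zero => simp [pow_zero, Pell.Solution₁.y_one]
    | succ k ih =>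
      rw [pow_succ, Pell.Solution₁.y_mul]
      exact dvd_add (hdvd.mul_left _) (ih.mul_right _)
  have hPH3 : ((p:ℤ)) ∣ H3 := by
    have h7 := hdvdall j
    rw [← hj, hs, Pell.Solution₁.y_mk] at h7
    exact h7
  -- final contradiction
  have hPprime : Prime ((p:ℤ)) := by exact Nat.prime_iff_prime_int.mp hp
  have hA1b1 : 1 ≤ A1 := by rw [hA1]; exact_mod_cast ha1pos
  have hA1b2 : A1 ≤ N := by rw [hA1, hN]; exact_mod_cast ha1len
  have hA2b1 : 1 ≤ A2 := by rw [hA2]; exact_mod_cast ha2pos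
  have hA2b2 : A2 ≤ N := by rw [hA2, hN]; exact_mod_cast ha2len
  have hM4b1 : 1 ≤ M4 := by rw [hM4]; exact_mod_cast hm4pos
  have hM4b2 : M4 ≤ N := by rw [hM4, hN]; exact_mod_cast hm4n
  have hNb : 1 ≤ N := by rw [hN]; exact_mod_cast hn1
  have hNP : N^2 < ((p:ℤ)) := by rw [hN]; exact_mod_cast hnp
  have hP3 : 3 ≤ ((p:ℤ)) := by exact_mod_cast hp3
  have hPne : ((p:ℤ)) ≠ 0 := by omega
  obtain ⟨t, ht⟩ := hPH3
  -- ((p:ℤ))^2 ∣ K3^2 - 1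
  have hb : K3^2 - 1 = ((p:ℤ))^2*(((p:ℤ))*t^2) := by
    linear_combination e3 + (((p:ℤ))*H3 + ((p:ℤ))^2*t)*ht
  have hdvd1' : ((p:ℤ)) ∣ K3 - (A2*A1+1) := ⟨M4*t, by linear_combination e1 + M4*ht⟩
  have hdvd2' : ((p:ℤ)) ∣ K3^2 - 1 := ⟨((p:ℤ))^2*t^2, by linear_combination hb⟩
  have hdvd3' : ((p:ℤ)) ∣ (A2*A1+1)^2 - 1 := by
    have hid : (A2*A1+1)^2 - 1 = (K3^2 - 1) - (K3 - (A2*A1+1))*(K3 + (A2*A1+1)) := by ring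
    rw [hid]
    exact dvd_sub hdvd2' (hdvd1'.mul_right _)
  have hdvd4' : ((p:ℤ)) ∣ (A1*A2)*(A1*A2 + 2) := by
    have hid : (A1*A2)*(A1*A2+2) = (A2*A1+1)^2 - 1 := by ring
    rw [hid]; exact hdvd3'
  have hprod1 : (1:ℤ) ≤ A1*A2 := by nlinarith only [hA1b1, hA2b1]
  have hprodN : A1*A2 ≤ N^2 := by nlinarith only [hA1b1, hA2b1, hA1b2, hA2b2, hNb]
  have hA1A2 : A1*A2 + 2 = ((p:ℤ)) := by
    rcases hPprime.dvd_mul.mp hdvd4' with h | h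
    · exfalso
      have h8 : ((p:ℤ)) ≤ A1*A2 := Int.le_of_dvd (by linarith only [hprod1]) h
      linarith only [h8, hprodN, hNP]
    · obtain ⟨k, hk⟩ := h
      have hk1 : 1 ≤ k := by
        by_contra hcon
        push_neg at hcon
        nlinarith only [hk, hprod1, hP3,
          mul_nonneg (show (0:ℤ) ≤ ((p:ℤ)) by linarith only [hP3]) (show (0:ℤ) ≤ -k by omega)]
      have hk2 : k < 2 := by
        by_contra hcon
        push_neg at hcon
        nlinarith only [hk, hprodN, hNP, hP3,
          mul_le_mul_of_nonneg_left hcon (show (0:ℤ) ≤ ((p:ℤ)) by linarith only [hP3])]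
      have hk3 : k = 1 := by omega
      rw [hk3, mul_one] at hk
      omega
  have hf : ((p:ℤ)) ∣ K3 + 1 := ⟨M4*t + 1, by linear_combination e1 + M4*ht + hA1A2⟩
  have hg : ¬ ((p:ℤ)) ∣ K3 - 1 := by
    intro hcon
    have h9 : ((p:ℤ)) ∣ 2 := by
      have hid : (2:ℤ) = (K3+1) - (K3-1) := by ring
      rw [hid]; exact dvd_sub hf hcon
    have h10 := Int.le_of_dvd (by norm_num) h9
    linarith only [h10, hP3]
  obtain ⟨w, hw⟩ := hf
  have hPw : ((p:ℤ)) ∣ w := by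
    have h9 : ((p:ℤ))*((K3-1)*w) = ((p:ℤ))*(((p:ℤ))*(((p:ℤ))*t^2)) := by
      linear_combination hb - (K3-1)*hw
    have h10 : (K3-1)*w = ((p:ℤ))*(((p:ℤ))*t^2) := mul_left_cancel₀ hPne h9
    have h11 : ((p:ℤ)) ∣ (K3-1)*w := ⟨((p:ℤ))*t^2, h10⟩
    rcases hPprime.dvd_mul.mp h11 with h | h
    · exact absurd h hg
    · exact h
  obtain ⟨v, hv⟩ := hPw
  have hi : (A2*(A1*N+1)+N) - M4 = ((p:ℤ))^2*(t - M4*v) := by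
    linear_combination (-1)*e2 + ((p:ℤ))*ht + (-M4)*hw + (-(M4*((p:ℤ))))*hv
  have hdvdK2 : ((p:ℤ))^2 ∣ (A2*(A1*N+1)+N) - M4 := ⟨t - M4*v, hi⟩
  have hsubst : A1*A2*N = (((p:ℤ))-2)*N := by
    rw [show A1*A2 = ((p:ℤ)) - 2 by linarith only [hA1A2]]
  have hpos : 0 < (A2*(A1*N+1)+N) - M4 := by
    nlinarith only [hsubst, hA2b1, hM4b2, hNb,
      mul_le_mul_of_nonneg_right (show (3:ℤ) ≤ ((p:ℤ)) by linarith only [hP3])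
        (show (0:ℤ) ≤ N by linarith only [hNb])]
  have hNltP : N < ((p:ℤ)) := by nlinarith only [hNP, hNb, sq_nonneg (N-1)]
  have hup : (A2*(A1*N+1)+N) - M4 < ((p:ℤ))^2 := by
    nlinarith only [hsubst, hA2b2, hM4b1, hNb, hNltP, hP3,
      mul_lt_mul_of_pos_left hNltP (show (0:ℤ) < ((p:ℤ)) by linarith only [hP3])]
  have hfin := Int.le_of_dvd hpos hdvdK2
  linarith only [hfin, hup]
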